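/- Let L/ℚ be a non-Galois cubic field with Galois closure M, σ ∈ Gal(M/ℚ) of order 3, and τ the generator of Gal(M/L). Let ρ₁ be a prime element of O_M over an odd rational prime p splitting completely in M, and set α_i = N_{M/L}(σ^{i−1}ρ₁) for i = 1, 2. Let q ≠ p be an odd rational prime splitting completely in M, 𝔔₁ a prime of O_M over q, and for j = 1, 2, 3 let 𝔓_j be the prime of O_L with 𝔓_j O_M = (σ^{j−1}𝔔₁) · τ(σ^{j−1}𝔔₁). Then the product of quadratic residue symbols ∏_{i=1}^{2} ∏_{j=1}^{3} (α_i/𝔓_j) equals 1. -/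

import Mathlib

open NumberField Module

set_option maxHeartbeats 1000000
set_option synthInstance.maxHeartbeats 400000

-- The quadratic residue symbol of `x` at the prime ideal `P`:
-- `1` if `x` is a square in the residue ring `R ⧸ P`, and `-1` otherwise.
open scoped Classical in
noncomputable def legSym {R : Type*} [CommRing R] (x : R) (P : Ideal R) : ℤ :=
  if ∃ y : R, x - y ^ 2 ∈ P then 1 else -1

/-- `p` splits completely in the number field `K`. -/
def SplitsCompletelyIn (K : Type*) [Field K] [NumberField K] (p : ℕ) : Prop :=
  {P : Ideal (𝓞 K) | P.IsPrime ∧ (p : 𝓞 K) ∈ P}.ncard = Module.finrank ℚ K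

/-- The image of an ideal of `𝓞 M` under the automorphism of `𝓞 M` induced by a
field automorphism of `M`. -/
noncomputable def galMapIdeal {M : Type*} [Field M] [NumberField M] (σ : M ≃ₐ[ℚ] M)
    (I : Ideal (𝓞 M)) : Ideal (𝓞 M) :=
  Ideal.map (galRestrict ℤ ℚ M (𝓞 M) σ) I

section Aux

open Ideal

open scoped Classical in
lemma legSym_eq_isSquare {R : Type*} [CommRing R] (x : R) (P : Ideal R) :
    legSym x P = if IsSquare (Ideal.Quotient.mk P x) then 1 else -1 := by
  unfold legSym
  refine if_congr ?_ rfl rfl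
  constructor
  · rintro ⟨y, hy⟩
    refine ⟨Ideal.Quotient.mk P y, ?_⟩
    have h : Ideal.Quotient.mk P x = Ideal.Quotient.mk P (y ^ 2) := Ideal.Quotient.eq.mpr hy
    rw [h, map_pow, sq]
  · rintro ⟨r, hr⟩
    obtain ⟨y, rfl⟩ := Ideal.Quotient.mk_surjective r
    refine ⟨y, Ideal.Quotient.eq.mp ?_⟩
    rw [map_pow, sq]
    exact hr

lemma isSquare_map_iff {F K : Type*} [CommRing F] [CommRing K] (f : F →+* K)
    (hf : Function.Bijective f) (a : F) : IsSquare (f a) ↔ IsSquare a := by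
  constructor
  · rintro ⟨r, hr⟩
    obtain ⟨y, rfl⟩ := hf.2 r
    exact ⟨y, hf.1 (by rw [hr, _root_.map_mul])⟩
  · rintro ⟨y, rfl⟩
    exact ⟨f y, by rw [_root_.map_mul]⟩

open scoped Classical in
lemma ifSquare_mul {F : Type*} [Field F] [Finite F] {a b : F} (ha : a ≠ 0) (hb : b ≠ 0) :
    (if IsSquare (a * b) then (1 : ℤ) else -1)
      = (if IsSquare a then (1 : ℤ) else -1) * (if IsSquare b then (1 : ℤ) else -1) := by
  letI : Fintype F := Fintype.ofFinite F
  have hab := mul_ne_zero ha hb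
  by_cases hA : IsSquare a <;> by_cases hB : IsSquare b
  · rw [if_pos hA, if_pos hB, if_pos (hA.mul hB)]
    norm_num
  · have h1 : quadraticChar F a = 1 := (quadraticChar_one_iff_isSquare ha).mpr hA
    have h2 : quadraticChar F b = -1 := quadraticChar_neg_one_iff_not_isSquare.mpr hB
    have h3 : ¬ IsSquare (a * b) := by
      intro hsq
      have h4 : quadraticChar F (a * b) = 1 := (quadraticChar_one_iff_isSquare hab).mpr hsq
      rw [_root_.map_mul, h1, h2] at h4
      norm_num at h4
    rw [if_pos hA, if_neg hB, if_neg h3]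
    norm_num
  · have h1 : quadraticChar F a = -1 := quadraticChar_neg_one_iff_not_isSquare.mpr hA
    have h2 : quadraticChar F b = 1 := (quadraticChar_one_iff_isSquare hb).mpr hB
    have h3 : ¬ IsSquare (a * b) := by
      intro hsq
      have h4 : quadraticChar F (a * b) = 1 := (quadraticChar_one_iff_isSquare hab).mpr hsq
      rw [_root_.map_mul, h1, h2] at h4
      norm_num at h4
    rw [if_neg hA, if_pos hB, if_neg h3]
    norm_num
  · have h1 : quadraticChar F a = -1 := quadraticChar_neg_one_iff_not_isSquare.mpr hA
    have h2 : quadraticChar F b = -1 := quadraticChar_neg_one_iff_not_isSquare.mpr hB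
    have h4 : quadraticChar F (a * b) = 1 := by
      rw [_root_.map_mul, h1, h2]
      norm_num
    have h3 : IsSquare (a * b) := (quadraticChar_one_iff_isSquare hab).mp h4
    rw [if_neg hA, if_neg hB, if_pos h3]
    norm_num

lemma absNorm_eq_of_splitsCompletely {K : Type*} [Field K] [NumberField K] {q : ℕ}
    (hq : q.Prime) (hsplit : SplitsCompletelyIn K q)
    {Q : Ideal (𝓞 K)} (hQ : Q.IsPrime) (hQq : (q : 𝓞 K) ∈ Q) :
    Ideal.absNorm Q = q := by
  classical
  have hn0 : 0 < finrank ℚ K := finrank_pos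
  have hq0 : (q : 𝓞 K) ≠ 0 := Nat.cast_ne_zero.mpr hq.ne_zero
  have hSfin : {P : Ideal (𝓞 K) | P.IsPrime ∧ (q : 𝓞 K) ∈ P}.Finite := by
    apply Set.finite_of_ncard_ne_zero
    rw [hsplit]
    omega
  set T := hSfin.toFinset with hT
  have hmemT : ∀ P : Ideal (𝓞 K), P ∈ T ↔ (P.IsPrime ∧ (q : 𝓞 K) ∈ P) := by
    intro P
    rw [hT, Set.Finite.mem_toFinset]
    rfl
  have hTcard : T.card = finrank ℚ K := by
    rw [hT, ← Set.ncard_eq_toFinset_card _ hSfin, hsplit]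
  have hmax : ∀ P ∈ T, Ideal.IsMaximal P := by
    intro P hP
    obtain ⟨h1, h2⟩ := (hmemT P).mp hP
    refine h1.isMaximal fun hbot => ?_
    rw [hbot] at h2
    exact hq0 (Ideal.mem_bot.mp h2)
  have hprod : (∏ P ∈ T, P) ∣ Ideal.span {(q : 𝓞 K)} := by
    refine Finset.prod_dvd_of_coprime ?_ ?_
    · intro I hI J hJ hne
      have h1 := hmax I (Finset.mem_coe.mp hI)
      have h2 := hmax J (Finset.mem_coe.mp hJ)
      exact Ideal.isCoprime_iff_sup_eq.mpr (Ideal.IsMaximal.coprime_of_ne h1 h2 hne)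
    · intro P hP
      rw [Ideal.dvd_iff_le, Ideal.span_singleton_le_iff_mem]
      exact ((hmemT P).mp hP).2
  have hnormspan : Ideal.absNorm (Ideal.span {(q : 𝓞 K)}) = q ^ finrank ℚ K := by
    rw [Ideal.absNorm_span_singleton]
    have h1 : (q : 𝓞 K) = algebraMap ℤ (𝓞 K) (q : ℤ) := by simp
    rw [h1, Algebra.norm_algebraMap_of_basis (Module.Free.chooseBasis ℤ (𝓞 K)),
      ← Module.finrank_eq_card_chooseBasisIndex, RingOfIntegers.rank]
    rw [Int.natAbs_pow]
    simp
  have hnormprod : (∏ P ∈ T, Ideal.absNorm P) ∣ q ^ finrank ℚ K := by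
    rw [← hnormspan, ← map_prod Ideal.absNorm _ T]
    exact map_dvd Ideal.absNorm hprod
  have hfactor : ∀ P ∈ T, ∃ m : ℕ, 1 ≤ m ∧ Ideal.absNorm P = q ^ m := by
    intro P hP
    have hdvd : Ideal.absNorm P ∣ q ^ finrank ℚ K :=
      dvd_trans (Finset.dvd_prod_of_mem _ hP) hnormprod
    obtain ⟨m, _, hPm⟩ := (Nat.dvd_prime_pow hq).mp hdvd
    refine ⟨m, ?_, hPm⟩
    rcases Nat.eq_zero_or_pos m with h0 | h1
    · exfalso
      rw [h0, pow_zero] at hPm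
      exact ((hmemT P).mp hP).1.ne_top (Ideal.absNorm_eq_one_iff.mp hPm)
    · exact h1
  have hge : ∀ P ∈ T, q ≤ Ideal.absNorm P := by
    intro P hP
    obtain ⟨m, hm1, hmeq⟩ := hfactor P hP
    rw [hmeq]
    calc q = q ^ 1 := (pow_one q).symm
    _ ≤ q ^ m := Nat.pow_le_pow_right hq.one_lt.le hm1
  have hQT : Q ∈ T := (hmemT Q).mpr ⟨hQ, hQq⟩
  obtain ⟨mq, hmq1, hmqeq⟩ := hfactor Q hQT
  rcases Nat.lt_or_ge mq 2 with hmq2 | hmq2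
  · interval_cases mq
    · rw [hmqeq, pow_one]
  · exfalso
    have hQbig : q * q ≤ Ideal.absNorm Q := by
      rw [hmqeq]
      calc q * q = q ^ 2 := (sq q).symm
      _ ≤ q ^ mq := Nat.pow_le_pow_right hq.one_lt.le hmq2
    have hrest : q ^ (T.erase Q).card ≤ ∏ P ∈ T.erase Q, Ideal.absNorm P := by
      calc q ^ (T.erase Q).card = ∏ _P ∈ T.erase Q, q := (Finset.prod_const q).symm
      _ ≤ ∏ P ∈ T.erase Q, Ideal.absNorm P :=
        Finset.prod_le_prod' fun P hP => hge P (Finset.mem_of_mem_erase hP)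
    have hsplit2 : ∏ P ∈ T, Ideal.absNorm P
        = Ideal.absNorm Q * ∏ P ∈ T.erase Q, Ideal.absNorm P :=
      (Finset.mul_prod_erase T _ hQT).symm
    have hle : ∏ P ∈ T, Ideal.absNorm P ≤ q ^ finrank ℚ K :=
      Nat.le_of_dvd (pow_pos hq.pos _) hnormprod
    have hcarderase : (T.erase Q).card = finrank ℚ K - 1 := by
      rw [Finset.card_erase_of_mem hQT, hTcard]
    have hgebig : q ^ (finrank ℚ K + 1) ≤ ∏ P ∈ T, Ideal.absNorm P := by
      rw [hsplit2]
      calc q ^ (finrank ℚ K + 1) = q ^ (1 + 1 + (finrank ℚ K - 1)) := by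
            congr 1
            omega
      _ = q * q * q ^ (finrank ℚ K - 1) := by
            rw [pow_add, pow_add, pow_one]
      _ ≤ Ideal.absNorm Q * ∏ P ∈ T.erase Q, Ideal.absNorm P := by
            apply Nat.mul_le_mul hQbig
            rw [← hcarderase]
            exact hrest
    have hlt : q ^ finrank ℚ K < q ^ (finrank ℚ K + 1) :=
      Nat.pow_lt_pow_right hq.one_lt (by omega)
    omega

lemma quotientMap_bijective_aux {R S : Type*} [CommRing R] [CommRing S]
    (f : R →+* S) {P : Ideal R} {Q : Ideal S} (hP : P.IsMaximal) (hQ : Q.IsPrime)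
    (hle : P ≤ Q.comap f) {q : ℕ} (hq : q.Prime) (hQq : (q : S) ∈ Q)
    (hcard : Nat.card (S ⧸ Q) = q) :
    Function.Bijective (Ideal.quotientMap Q f hle) := by
  classical
  haveI := hP
  letI : Field (R ⧸ P) := Ideal.Quotient.field P
  haveI : Nontrivial (S ⧸ Q) := Ideal.Quotient.nontrivial_iff.mpr hQ.ne_top
  haveI : Finite (S ⧸ Q) := Nat.finite_of_card_ne_zero (by rw [hcard]; exact hq.ne_zero)
  refine ⟨RingHom.injective _, ?_⟩
  have hq0 : ((q : ℕ) : S ⧸ Q) = 0 := by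
    rw [← map_natCast (Ideal.Quotient.mk Q) q]
    exact Ideal.Quotient.eq_zero_iff_mem.mpr hQq
  haveI : CharP (S ⧸ Q) q := (CharP.charP_iff_prime_eq_zero hq).mpr hq0
  haveI : Fact q.Prime := ⟨hq⟩
  let g : ZMod q →+* S ⧸ Q := ZMod.castHom dvd_rfl (S ⧸ Q)
  have hgsurj : Function.Surjective g := by
    letI : Fintype (S ⧸ Q) := Fintype.ofFinite _
    have hcards : Fintype.card (ZMod q) = Fintype.card (S ⧸ Q) := by
      rw [ZMod.card, ← Nat.card_eq_fintype_card, hcard]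
    exact ((Fintype.bijective_iff_injective_and_card g).mpr ⟨g.injective, hcards⟩).2
  intro y
  obtain ⟨z, hz⟩ := hgsurj y
  obtain ⟨n, rfl⟩ := ZMod.natCast_zmod_surjective z
  refine ⟨(n : R ⧸ P), ?_⟩
  rw [map_natCast, ← hz, map_natCast]

open scoped Classical in
lemma legSym_eq_prod_aux {L M : Type*} [Field L] [Field M] [NumberField L] [NumberField M]
    [Algebra L M] [IsScalarTower ℚ L M]
    (σj : M ≃ₐ[ℚ] M) {q : ℕ} (hq : q.Prime)
    {𝔔₁ : Ideal (𝓞 M)} (h𝔔₁prime : 𝔔₁.IsPrime) (h𝔔₁q : (q : 𝓞 M) ∈ 𝔔₁)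
    (hcard : ∀ Q : Ideal (𝓞 M), Q.IsPrime → (q : 𝓞 M) ∈ Q → Nat.card ((𝓞 M) ⧸ Q) = q)
    {P : Ideal (𝓞 L)} (hP : P.IsPrime)
    {Q' : Ideal (𝓞 M)} (hQ'q : (q : 𝓞 M) ∈ Q')
    (hPmap : Ideal.map (algebraMap (𝓞 L) (𝓞 M)) P = galMapIdeal σj 𝔔₁ * Q')
    (x : 𝓞 L) (y z : 𝓞 M) (hxyz : algebraMap (𝓞 L) (𝓞 M) x = y * z)
    (hy : Ideal.Quotient.mk 𝔔₁ ((galRestrict ℤ ℚ M (𝓞 M) σj).symm y) ≠ 0)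
    (hz : Ideal.Quotient.mk 𝔔₁ ((galRestrict ℤ ℚ M (𝓞 M) σj).symm z) ≠ 0) :
    legSym x P =
      (if IsSquare (Ideal.Quotient.mk 𝔔₁ ((galRestrict ℤ ℚ M (𝓞 M) σj).symm y))
        then (1 : ℤ) else -1) *
      (if IsSquare (Ideal.Quotient.mk 𝔔₁ ((galRestrict ℤ ℚ M (𝓞 M) σj).symm z))
        then (1 : ℤ) else -1) := by
  classical
  haveI := h𝔔₁prime
  set s := galRestrict ℤ ℚ M (𝓞 M) σj with hs
  set Qj := galMapIdeal σj 𝔔₁ with hQjdef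
  have hQjprime : Qj.IsPrime := Ideal.map_isPrime_of_equiv s
  have hQjq : (q : 𝓞 M) ∈ Qj := by
    have h := Ideal.mem_map_of_mem s h𝔔₁q
    rwa [map_natCast] at h
  have hq0M : (q : 𝓞 M) ≠ 0 := Nat.cast_ne_zero.mpr hq.ne_zero
  have hPbot : P ≠ ⊥ := by
    intro hbot
    rw [hbot, Ideal.map_bot] at hPmap
    have hmm := Ideal.mul_mem_mul hQjq hQ'q
    rw [← hPmap] at hmm
    exact mul_ne_zero hq0M hq0M (Ideal.mem_bot.mp hmm)
  haveI hPmax : P.IsMaximal := hP.isMaximal hPbot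
  have hle : P ≤ Ideal.comap (algebraMap (𝓞 L) (𝓞 M)) Qj := by
    rw [← Ideal.map_le_iff_le_comap, hPmap]
    exact Ideal.mul_le_left
  have hbij := quotientMap_bijective_aux (algebraMap (𝓞 L) (𝓞 M)) hPmax hQjprime hle hq hQjq
    (hcard Qj hQjprime hQjq)
  rw [legSym_eq_isSquare]
  have h1 : IsSquare (Ideal.Quotient.mk P x) ↔ IsSquare (Ideal.Quotient.mk Qj (y * z)) := by
    rw [← hxyz, ← Ideal.quotientMap_mk (H := hle)]
    exact (isSquare_map_iff _ hbij _).symm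
  have hQjmap : Qj = Ideal.map (s.toRingEquiv : (𝓞 M) →+* (𝓞 M)) 𝔔₁ := rfl
  have h2 : ∀ w : 𝓞 M,
      IsSquare (Ideal.Quotient.mk Qj w) ↔ IsSquare (Ideal.Quotient.mk 𝔔₁ (s.symm w)) := by
    intro w
    set e := Ideal.quotientEquiv 𝔔₁ Qj s.toRingEquiv hQjmap with he
    have hmk : e (Ideal.Quotient.mk 𝔔₁ (s.symm w)) = Ideal.Quotient.mk Qj w := by
      rw [he, Ideal.quotientEquiv_mk]
      congr 1
      simp
    rw [← hmk]
    exact isSquare_map_iff (e : ((𝓞 M) ⧸ 𝔔₁) →+* ((𝓞 M) ⧸ Qj)) e.bijective _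
  have h3 : IsSquare (Ideal.Quotient.mk P x)
      ↔ IsSquare (Ideal.Quotient.mk 𝔔₁ (s.symm y) * Ideal.Quotient.mk 𝔔₁ (s.symm z)) := by
    rw [h1, h2 (y * z), _root_.map_mul, _root_.map_mul]
  have h𝔔₁bot : 𝔔₁ ≠ ⊥ := by
    intro hbot
    rw [hbot] at h𝔔₁q
    exact hq0M (Ideal.mem_bot.mp h𝔔₁q)
  haveI := h𝔔₁prime.isMaximal h𝔔₁bot
  letI : Field ((𝓞 M) ⧸ 𝔔₁) := Ideal.Quotient.field 𝔔₁
  haveI : Finite ((𝓞 M) ⧸ 𝔔₁) :=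
    Nat.finite_of_card_ne_zero (by rw [hcard 𝔔₁ h𝔔₁prime h𝔔₁q]; exact hq.ne_zero)
  rw [if_congr h3 rfl rfl]
  exact ifSquare_mul hy hz

end Aux

theorem stmt8 (L M : Type*) [Field L] [Field M] [NumberField L] [NumberField M]
    [Algebra L M] [IsScalarTower ℚ L M]
    (hL3 : finrank ℚ L = 3) (hLnG : ¬ IsGalois ℚ L)
    (hMGal : IsGalois ℚ M) (hM6 : finrank ℚ M = 6)
    (σ τ : M ≃ₐ[ℚ] M) (hσ : orderOf σ = 3) (hτ : orderOf τ = 2)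
    (hτL : ∀ x : L, τ (algebraMap L M x) = algebraMap L M x)
    (p : ℕ) (hp : p.Prime) (hpodd : p ≠ 2) (hpsplit : SplitsCompletelyIn M p)
    (ρ₁ : 𝓞 M) (hρprime : Prime ρ₁) (hρp : (p : 𝓞 M) ∈ Ideal.span {ρ₁})
    -- αᵢ = N_{M/L}(σ^{i-1} ρ₁) = (σ^{i-1} ρ₁) · (τ σ^{i-1} ρ₁) ∈ 𝓞 L, for i = 1, 2
    (α₁ α₂ : 𝓞 L)
    (hα₁ : algebraMap L M (algebraMap (𝓞 L) L α₁) =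
      algebraMap (𝓞 M) M ρ₁ * τ (algebraMap (𝓞 M) M ρ₁))
    (hα₂ : algebraMap L M (algebraMap (𝓞 L) L α₂) =
      σ (algebraMap (𝓞 M) M ρ₁) * τ (σ (algebraMap (𝓞 M) M ρ₁)))
    (q : ℕ) (hq : q.Prime) (hqodd : q ≠ 2) (hqp : q ≠ p) (hqsplit : SplitsCompletelyIn M q)
    -- 𝔔₁ a prime of 𝓞 M over q, and 𝔓_j the prime of 𝓞 L with
    -- 𝔓_j 𝓞 M = (σ^{j-1} 𝔔₁) · τ(σ^{j-1} 𝔔₁)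
    (𝔔₁ : Ideal (𝓞 M)) (h𝔔₁prime : 𝔔₁.IsPrime) (h𝔔₁q : (q : 𝓞 M) ∈ 𝔔₁)
    (𝔓 : Fin 3 → Ideal (𝓞 L)) (h𝔓prime : ∀ j, (𝔓 j).IsPrime)
    (h𝔓 : ∀ j : Fin 3, Ideal.map (algebraMap (𝓞 L) (𝓞 M)) (𝔓 j) =
      galMapIdeal (σ ^ (j : ℕ)) 𝔔₁ * galMapIdeal τ (galMapIdeal (σ ^ (j : ℕ)) 𝔔₁)) :
    (∏ j : Fin 3, legSym α₁ (𝔓 j)) * (∏ j : Fin 3, legSym α₂ (𝔓 j)) = 1 := by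
  classical
  -- the cardinality of residue fields above q
  have hcard : ∀ Q : Ideal (𝓞 M), Q.IsPrime → (q : 𝓞 M) ∈ Q → Nat.card ((𝓞 M) ⧸ Q) = q := by
    intro Q hQ hQq
    have h := absNorm_eq_of_splitsCompletely hq hqsplit hQ hQq
    rw [← h, Ideal.absNorm_apply, Submodule.cardQuot_apply]
  -- membership of q in Galois translates
  have hstep : ∀ (g : M ≃ₐ[ℚ] M) (I : Ideal (𝓞 M)),
      (q : 𝓞 M) ∈ I → (q : 𝓞 M) ∈ galMapIdeal g I := by
    intro g I h
    have h2 := Ideal.mem_map_of_mem (galRestrict ℤ ℚ M (𝓞 M) g) h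
    rwa [map_natCast] at h2
  -- images of α₁ α₂ in 𝓞 M
  have hα₁' : algebraMap (𝓞 L) (𝓞 M) α₁ = ρ₁ * galRestrict ℤ ℚ M (𝓞 M) τ ρ₁ := by
    apply RingOfIntegers.coe_injective
    rw [map_mul]
    have hLM : algebraMap (𝓞 M) M (algebraMap (𝓞 L) (𝓞 M) α₁)
        = algebraMap L M (algebraMap (𝓞 L) L α₁) := rfl
    rw [hLM, hα₁, algebraMap_galRestrict_apply]
  have hα₂' : algebraMap (𝓞 L) (𝓞 M) α₂ =
      galRestrict ℤ ℚ M (𝓞 M) σ ρ₁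
        * galRestrict ℤ ℚ M (𝓞 M) τ (galRestrict ℤ ℚ M (𝓞 M) σ ρ₁) := by
    apply RingOfIntegers.coe_injective
    rw [map_mul]
    have hLM : algebraMap (𝓞 M) M (algebraMap (𝓞 L) (𝓞 M) α₂)
        = algebraMap L M (algebraMap (𝓞 L) L α₂) := rfl
    rw [hLM, hα₂, algebraMap_galRestrict_apply, algebraMap_galRestrict_apply,
      algebraMap_galRestrict_apply]
  -- nonvanishing of Galois conjugates of ρ₁ mod 𝔔₁
  have hnz : ∀ u : (𝓞 M) ≃ₐ[ℤ] (𝓞 M), Ideal.Quotient.mk 𝔔₁ (u ρ₁) ≠ 0 := by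
    intro u h0
    have hmem : u ρ₁ ∈ 𝔔₁ := Ideal.Quotient.eq_zero_iff_mem.mp h0
    obtain ⟨c, hc⟩ := Ideal.mem_span_singleton.mp hρp
    have hpmem : (p : 𝓞 M) ∈ 𝔔₁ := by
      have h1 : (p : 𝓞 M) = u ρ₁ * u c := by
        rw [← map_mul, ← hc, map_natCast]
      rw [h1]
      exact Ideal.mul_mem_right _ _ hmem
    have hcop : IsCoprime (p : 𝓞 M) (q : 𝓞 M) := by
      have h1 : IsCoprime (p : ℤ) (q : ℤ) :=
        Nat.isCoprime_iff_coprime.mpr ((Nat.coprime_primes hp hq).mpr (Ne.symm hqp))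
      have h2 := h1.map (algebraMap ℤ (𝓞 M))
      simpa using h2
    obtain ⟨a, b, hab⟩ := hcop
    refine h𝔔₁prime.ne_top ((Ideal.eq_top_iff_one _).mpr ?_)
    rw [← hab]
    exact add_mem (Ideal.mul_mem_left _ _ hpmem) (Ideal.mul_mem_left _ _ h𝔔₁q)
  -- conversion lemmas for galRestrict
  have hsymmρ : ∀ a : M ≃ₐ[ℚ] M, (galRestrict ℤ ℚ M (𝓞 M) a).symm ρ₁
      = galRestrict ℤ ℚ M (𝓞 M) a⁻¹ ρ₁ := by
    intro a
    rw [map_inv]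
    rfl
  have hsymmg : ∀ a g : M ≃ₐ[ℚ] M,
      (galRestrict ℤ ℚ M (𝓞 M) a).symm (galRestrict ℤ ℚ M (𝓞 M) g ρ₁)
      = galRestrict ℤ ℚ M (𝓞 M) (a⁻¹ * g) ρ₁ := by
    intro a g
    rw [map_mul, map_inv, AlgEquiv.mul_apply]
    rfl
  -- the sign function
  set F : (M ≃ₐ[ℚ] M) → ℤ := fun g =>
    if IsSquare (Ideal.Quotient.mk 𝔔₁ (galRestrict ℤ ℚ M (𝓞 M) g ρ₁)) then 1 else -1
    with hFdef
  have hF : ∀ g : M ≃ₐ[ℚ] M, F g =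
      if IsSquare (Ideal.Quotient.mk 𝔔₁ (galRestrict ℤ ℚ M (𝓞 M) g ρ₁)) then 1 else -1 := by
    intro g
    rw [hFdef]
  have hFsq : ∀ g : M ≃ₐ[ℚ] M, F g * F g = 1 := by
    intro g
    rw [hF]
    by_cases h : IsSquare (Ideal.Quotient.mk 𝔔₁ (galRestrict ℤ ℚ M (𝓞 M) g ρ₁)) <;>
      simp [h]
  -- evaluation of the Legendre symbols
  have hleg1 : ∀ j : Fin 3, legSym α₁ (𝔓 j)
      = F ((σ ^ (j : ℕ))⁻¹) * F ((σ ^ (j : ℕ))⁻¹ * τ) := by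
    intro j
    have hy : Ideal.Quotient.mk 𝔔₁ ((galRestrict ℤ ℚ M (𝓞 M) (σ ^ (j : ℕ))).symm ρ₁) ≠ 0 := by
      rw [hsymmρ]
      exact hnz _
    have hz : Ideal.Quotient.mk 𝔔₁ ((galRestrict ℤ ℚ M (𝓞 M) (σ ^ (j : ℕ))).symm
        (galRestrict ℤ ℚ M (𝓞 M) τ ρ₁)) ≠ 0 := by
      rw [hsymmg]
      exact hnz _
    have h := legSym_eq_prod_aux (σ ^ (j : ℕ)) hq h𝔔₁prime h𝔔₁q hcard (h𝔓prime j)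
      (hstep τ _ (hstep (σ ^ (j : ℕ)) _ h𝔔₁q)) (h𝔓 j) α₁ ρ₁
      (galRestrict ℤ ℚ M (𝓞 M) τ ρ₁) hα₁' hy hz
    rw [h, hsymmρ, hsymmg, hF ((σ ^ (j : ℕ))⁻¹), hF ((σ ^ (j : ℕ))⁻¹ * τ)]
  have hleg2 : ∀ j : Fin 3, legSym α₂ (𝔓 j)
      = F ((σ ^ (j : ℕ))⁻¹ * σ) * F ((σ ^ (j : ℕ))⁻¹ * (τ * σ)) := by
    intro j
    have hy : Ideal.Quotient.mk 𝔔₁ ((galRestrict ℤ ℚ M (𝓞 M) (σ ^ (j : ℕ))).symm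
        (galRestrict ℤ ℚ M (𝓞 M) σ ρ₁)) ≠ 0 := by
      rw [hsymmg]
      exact hnz _
    have hzconv : galRestrict ℤ ℚ M (𝓞 M) τ (galRestrict ℤ ℚ M (𝓞 M) σ ρ₁)
        = galRestrict ℤ ℚ M (𝓞 M) (τ * σ) ρ₁ := by
      rw [map_mul, AlgEquiv.mul_apply]
    have hz : Ideal.Quotient.mk 𝔔₁ ((galRestrict ℤ ℚ M (𝓞 M) (σ ^ (j : ℕ))).symm
        (galRestrict ℤ ℚ M (𝓞 M) τ (galRestrict ℤ ℚ M (𝓞 M) σ ρ₁))) ≠ 0 := by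
      rw [hzconv, hsymmg]
      exact hnz _
    have h := legSym_eq_prod_aux (σ ^ (j : ℕ)) hq h𝔔₁prime h𝔔₁q hcard (h𝔓prime j)
      (hstep τ _ (hstep (σ ^ (j : ℕ)) _ h𝔔₁q)) (h𝔓 j) α₂
      (galRestrict ℤ ℚ M (𝓞 M) σ ρ₁)
      (galRestrict ℤ ℚ M (𝓞 M) τ (galRestrict ℤ ℚ M (𝓞 M) σ ρ₁)) hα₂' hy hz
    rw [h, hzconv, hsymmg, hsymmg, hF ((σ ^ (j : ℕ))⁻¹ * σ), hF ((σ ^ (j : ℕ))⁻¹ * (τ * σ))]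
  -- group-theoretic facts
  have hσ3 : σ ^ 3 = 1 := by
    rw [← hσ]
    exact pow_orderOf_eq_one σ
  have hσinv : σ⁻¹ = σ ^ 2 := by
    apply inv_eq_of_mul_eq_one_left
    rw [← pow_succ]
    exact hσ3
  have hσ2inv : (σ ^ 2)⁻¹ = σ := by
    apply inv_eq_of_mul_eq_one_left
    rw [← pow_succ']
    exact hσ3
  have hττ : τ * τ = 1 := by
    have h := pow_orderOf_eq_one τ
    rwa [hτ, pow_two] at h
  have hcardG : Nat.card (M ≃ₐ[ℚ] M) = 6 := by
    rw [IsGalois.card_aut_eq_finrank, hM6]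
  have hindex : (Subgroup.zpowers σ).index = 2 := by
    have h1 := Subgroup.card_mul_index (Subgroup.zpowers σ)
    rw [Nat.card_zpowers, hσ, hcardG] at h1
    omega
  have hmemτστ : τ * σ * τ ∈ Subgroup.zpowers σ := by
    have hσmem : σ ∈ Subgroup.zpowers σ := Subgroup.mem_zpowers σ
    rw [Subgroup.mul_mem_iff_of_index_two hindex,
      Subgroup.mul_mem_iff_of_index_two hindex]
    tauto
  obtain ⟨k, hk⟩ := Subgroup.mem_zpowers_iff.mp hmemτστ
  have hk' : σ ^ ((k % 3).toNat) = τ * σ * τ := by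
    rw [← hk, ← zpow_natCast, Int.toNat_of_nonneg (Int.emod_nonneg k (by norm_num))]
    have h3 : (3 : ℤ) = ((orderOf σ : ℕ) : ℤ) := by rw [hσ]; norm_num
    rw [h3]
    exact zpow_mod_orderOf σ k
  set m := (k % 3).toNat with hm
  have hmlt : m < 3 := by
    have h1 : k % 3 < 3 := Int.emod_lt_of_pos k (by norm_num)
    have h2 : 0 ≤ k % 3 := Int.emod_nonneg k (by norm_num)
    omega
  have hτσ : τ * σ = σ ^ m * τ := by
    have h1 : (τ * σ * τ) * τ = τ * σ := by
      rw [mul_assoc (τ * σ), hττ, mul_one]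
    rw [← h1, hk']
  -- assemble
  simp only [hleg1, hleg2, Fin.prod_univ_three]
  simp only [Fin.val_zero, Fin.val_one, Fin.val_two, pow_zero, pow_one, inv_one, one_mul]
  rw [hσinv, hσ2inv, hτσ]
  have hσ2σ : σ ^ 2 * σ = 1 := by rw [← pow_succ]; exact hσ3
  have hσσ : σ * σ = σ ^ 2 := (sq σ).symm
  rw [hσ2σ, hσσ]
  rw [← mul_assoc (σ ^ 2) (σ ^ m) τ, ← mul_assoc σ (σ ^ m) τ, ← pow_add, ← pow_succ']
  have hkey : (F 1 * F 1) * ((F σ * F σ) * ((F (σ ^ 2) * F (σ ^ 2)) * ((F τ * F τ) *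
      ((F (σ * τ) * F (σ * τ)) * (F (σ ^ 2 * τ) * F (σ ^ 2 * τ)))))) = 1 := by
    rw [hFsq, hFsq, hFsq, hFsq, hFsq, hFsq]
    norm_num
  interval_cases m
  · -- m = 0
    rw [show (0 : ℕ) + 1 = 1 from rfl, pow_one]
    rw [show σ ^ (2 + 0) = σ ^ 2 from by norm_num]
    rw [show σ ^ (0 : ℕ) * τ = τ from by rw [pow_zero, one_mul]]
    linear_combination hkey
  · -- m = 1
    rw [show (1 : ℕ) + 1 = 2 from rfl]
    rw [show σ ^ (2 + 1) = 1 from by rw [show (2:ℕ)+1 = 3 from rfl]; exact hσ3]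
    rw [show σ ^ (1 : ℕ) * τ = σ * τ from by rw [pow_one]]
    rw [one_mul]
    linear_combination hkey
  · -- m = 2
    rw [show σ ^ (2 + 2) = σ from by
      rw [show (2:ℕ)+2 = 3+1 from rfl, pow_succ, hσ3, one_mul]]
    rw [show σ ^ (2 + 1 : ℕ) = 1 from by rw [show (2:ℕ)+1 = 3 from rfl]; exact hσ3]
    rw [one_mul]
    linear_combination hkey
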